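/- The two rational rotation matrices A = (1/3)·[[−1, −2, 2], [2, 1, 2], [−2, 2, 1]] and B = (1/3)·[[−1, 2, 2], [−2, 1, −2], [−2, −2, 1]] freely generate a free subgroup of rank 2 of SO₃(ℚ): the homomorphism from the free group on two generators to the group of invertible 3×3 rational matrices sending the generators to A and B is injective. -/

import Mathlib

open Matrix FreeGroup

namespace TwoRotAux

/-- `3A` as an integer matrix. -/
def ma : Matrix (Fin 3) (Fin 3) ℤ := !![-1,-2,2; 2,1,2; -2,2,1]
/-- `3B` as an integer matrix. -/
def mb : Matrix (Fin 3) (Fin 3) ℤ := !![-1,2,2; -2,1,-2; -2,-2,1]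

/-- Integer matrix attached to a letter of a word: `3A, 3A⁻¹, 3B, 3B⁻¹`. -/
def letter (x : Fin 2 × Bool) : Matrix (Fin 3) (Fin 3) ℤ :=
  cond x.2 (![ma, mb] x.1) (![ma, mb] x.1)ᵀ

/-- Column vector of the rank-one reduction mod 3. -/
def cv (x : Fin 2 × Bool) : Fin 3 → ZMod 3 :=
  cond x.2 (![![1,1,2], ![2,1,1]] x.1) (![![1,2,1], ![1,1,1]] x.1)

/-- Row vector of the rank-one reduction mod 3. -/
def rv (x : Fin 2 × Bool) : Fin 3 → ZMod 3 :=
  cond x.2 (![![2,1,2], ![1,1,1]] x.1) (![![2,2,1], ![2,1,1]] x.1)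

lemma letter_mod (x : Fin 2 × Bool) :
    (letter x).map (Int.cast : ℤ → ZMod 3) = vecMulVec (cv x) (rv x) := by
  obtain ⟨i, b⟩ := x
  fin_cases i <;> cases b <;> decide

lemma dot_ne (x y : Fin 2 × Bool) (h : y ≠ (x.1, !x.2)) : rv x ⬝ᵥ cv y ≠ 0 := by
  revert h; revert x y; decide

lemma cv_ne (x : Fin 2 × Bool) (i : Fin 3) : cv x i ≠ 0 := by revert x i; decide
lemma rv_ne (x : Fin 2 × Bool) (i : Fin 3) : rv x i ≠ 0 := by revert x i; decide

lemma vmv_mul (u w u' w' : Fin 3 → ZMod 3) :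
    vecMulVec u w * vecMulVec u' w' = (w ⬝ᵥ u') • vecMulVec u w' := by
  ext i j
  simp only [Matrix.mul_apply, vecMulVec_apply, Matrix.smul_apply, dotProduct,
    Fin.sum_univ_three, smul_eq_mul]
  ring

/-- "no cancellation" relation between consecutive letters of a reduced word. -/
def Rel (p q : Fin 2 × Bool) : Prop := q ≠ (p.1, !p.2)

lemma chain'_of_noRed (L : List (Fin 2 × Bool))
    (h : ∀ (L₂ : List (Fin 2 × Bool)) (x : Fin 2) (b : Bool) (L₃ : List (Fin 2 × Bool)),
      L ≠ L₂ ++ (x, b) :: (x, !b) :: L₃) :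
    List.Chain' Rel L := by
  induction L with
  | nil => exact List.IsChain.nil
  | cons p t ih =>
    cases t with
    | nil => exact List.IsChain.singleton _
    | cons q t' =>
      rw [List.Chain', List.isChain_cons_cons]
      refine ⟨?_, ih fun L₂ x b L₃ hEq => h (p :: L₂) x b L₃ (by rw [hEq]; rfl)⟩
      intro hq
      exact h [] p.1 p.2 t' (by rw [← hq]; simp [Rel] at hq ⊢)

lemma prod_mod (L : List (Fin 2 × Bool)) (p : Fin 2 × Bool)
    (h : List.Chain' Rel (p :: L)) :
    ∃ c : ZMod 3, c ≠ 0 ∧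
      ((p :: L).map fun x => vecMulVec (cv x) (rv x)).prod
        = c • vecMulVec (cv p) (rv ((p :: L).getLast (by simp))) := by
  induction L generalizing p with
  | nil => exact ⟨1, one_ne_zero, by simp⟩
  | cons q t ih =>
    rw [List.Chain', List.isChain_cons_cons] at h
    obtain ⟨hpq, h'⟩ := h
    obtain ⟨c, hc, he⟩ := ih q h'
    refine ⟨c * (rv p ⬝ᵥ cv q), mul_ne_zero hc (dot_ne p q hpq), ?_⟩
    rw [List.map_cons, List.prod_cons, he, mul_smul_comm, vmv_mul,
      List.getLast_cons (List.cons_ne_nil q t), smul_smul, mul_comm]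

lemma prod_smul_map (c : ℚ) (g : (Fin 2 × Bool) → Matrix (Fin 3) (Fin 3) ℚ) :
    ∀ L : List (Fin 2 × Bool),
      (L.map fun x => c • g x).prod = c ^ L.length • (L.map g).prod
  | [] => by simp
  | x :: t => by
    rw [List.map_cons, List.prod_cons, prod_smul_map c g t, List.map_cons,
      List.prod_cons, smul_mul_smul_comm, List.length_cons, pow_succ, mul_comm]

lemma map_prod_int {S : Type*} [CommRing S] :
    ∀ L : List (Matrix (Fin 3) (Fin 3) ℤ),
      (L.prod).map (Int.cast : ℤ → S) = (L.map fun M => M.map (Int.cast : ℤ → S)).prod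
  | [] => by
    ext i j
    simp [Matrix.map_apply, Matrix.one_apply, apply_ite (Int.cast : ℤ → S)]
  | M :: t => by
    rw [List.prod_cons, List.map_cons, List.prod_cons, ← map_prod_int t]
    ext i j
    simp only [Matrix.map_apply, Matrix.mul_apply, Fin.sum_univ_three]
    push_cast
    ring

theorem aux (fv : Fin 2 → GL (Fin 3) ℚ)
    (h0 : (fv 0 : Matrix (Fin 3) (Fin 3) ℚ) = (3⁻¹ : ℚ) • (letter (0, true)).map Int.cast)
    (h1 : (fv 1 : Matrix (Fin 3) (Fin 3) ℚ) = (3⁻¹ : ℚ) • (letter (1, true)).map Int.cast) :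
    Function.Injective (FreeGroup.lift fv) := by
  rw [injective_iff_map_eq_one]
  intro g hg
  by_contra hne
  -- the word of `g` is nonempty and reduced
  have hL : g.toWord ≠ [] := fun h => hne (FreeGroup.toWord_eq_nil_iff.mp h)
  have hchain : List.Chain' Rel g.toWord :=
    chain'_of_noRed _ fun L₂ x b L₃ hEq =>
      FreeGroup.reduce.not ((FreeGroup.reduce_toWord g).trans hEq)
  -- the matrix of a letter
  have hinv : ∀ i : Fin 2,
      ((fv i)⁻¹ : GL (Fin 3) ℚ).val = (3⁻¹ : ℚ) • (letter (i, false)).map Int.cast := by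
    intro i
    have hfi : (fv i : Matrix (Fin 3) (Fin 3) ℚ)
        = (3⁻¹ : ℚ) • (letter (i, true)).map Int.cast := by
      fin_cases i <;> assumption
    rw [Matrix.coe_units_inv, Matrix.inv_eq_right_inv]
    rw [hfi]
    ext j k
    fin_cases i <;> fin_cases j <;> fin_cases k <;>
      simp [Matrix.mul_apply, Fin.sum_univ_three, letter, ma, mb, Matrix.one_apply,
        Matrix.transpose_apply, Matrix.map_apply, Matrix.smul_apply, Matrix.vecHead,
        Matrix.vecTail] <;>
      norm_num
  have hFv : ∀ x : Fin 2 × Bool,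
      ((cond x.2 (fv x.1) (fv x.1)⁻¹ : GL (Fin 3) ℚ) : Matrix (Fin 3) (Fin 3) ℚ)
        = (3⁻¹ : ℚ) • (letter x).map Int.cast := by
    rintro ⟨i, b⟩
    cases b
    · exact hinv i
    · fin_cases i <;> assumption
  -- matrix-level consequence of `lift fv g = 1`
  have h1' : ((FreeGroup.lift fv g : GL (Fin 3) ℚ) : Matrix (Fin 3) (Fin 3) ℚ) = 1 := by
    rw [hg]; rfl
  have h2 : ((FreeGroup.lift fv g : GL (Fin 3) ℚ) : Matrix (Fin 3) (Fin 3) ℚ)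
      = (g.toWord.map fun x =>
          ((cond x.2 (fv x.1) (fv x.1)⁻¹ : GL (Fin 3) ℚ) : Matrix (Fin 3) (Fin 3) ℚ)).prod := by
    conv_lhs => rw [← FreeGroup.mk_toWord (x := g)]
    rw [FreeGroup.lift_mk]
    exact (map_list_prod (Units.coeHom (Matrix (Fin 3) (Fin 3) ℚ)) _).trans
      (by rw [List.map_map]; rfl)
  set n := g.toWord.length with hn
  have h3 : (g.toWord.map fun x => (letter x).map (Int.cast : ℤ → ℚ)).prod
      = (3 : ℚ) ^ n • 1 := by
    have hone : (g.toWord.map fun x =>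
        (3⁻¹ : ℚ) • (letter x).map (Int.cast : ℤ → ℚ)).prod = 1 := by
      rw [← h1', h2]
      congr 1
      exact List.map_congr_left fun x _ => (hFv x).symm
    rw [prod_smul_map] at hone
    rw [← hn] at hone
    have h9 : ((3 : ℚ) ^ n)⁻¹ • (g.toWord.map fun x =>
        (letter x).map (Int.cast : ℤ → ℚ)).prod = 1 := by
      rw [← inv_pow]; exact hone
    rw [inv_smul_eq_iff₀ (by positivity)] at h9
    exact h9
  -- transfer to ℤ
  have h4 : (g.toWord.map letter).prod = (3 : ℤ) ^ n • 1 := by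
    apply Matrix.map_injective (Int.cast_injective (α := ℚ))
    show ((g.toWord.map letter).prod).map _ = ((3 : ℤ) ^ n • 1 : Matrix (Fin 3) (Fin 3) ℤ).map _
    rw [map_prod_int, List.map_map]
    show (g.toWord.map fun x => (letter x).map (Int.cast : ℤ → ℚ)).prod = _
    rw [h3]
    ext i j
    simp only [Matrix.map_apply, Matrix.smul_apply, Matrix.one_apply, smul_eq_mul,
      mul_ite, mul_one, mul_zero]
    split_ifs <;> push_cast <;> ring
  -- reduce mod 3
  have h5 : ((g.toWord.map letter).prod).map (Int.cast : ℤ → ZMod 3)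
      = (g.toWord.map fun x => vecMulVec (cv x) (rv x)).prod := by
    rw [map_prod_int, List.map_map]
    congr 1
    exact List.map_congr_left fun x _ => letter_mod x
  have h6 : ((g.toWord.map letter).prod).map (Int.cast : ℤ → ZMod 3) = 0 := by
    rw [h4]
    ext i j
    have hn1 : n ≠ 0 := fun h => hL (List.length_eq_zero_iff.mp (by rw [← hn]; exact h))
    simp only [Matrix.map_apply, Matrix.smul_apply, Matrix.one_apply, smul_eq_mul,
      mul_ite, mul_one, mul_zero, apply_ite (Int.cast : ℤ → ZMod 3), Int.cast_pow,
      Int.cast_zero, Matrix.zero_apply]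
    have h30 : ((3 : ℤ) : ZMod 3) = 0 := by decide
    rw [h30, zero_pow hn1]
    simp
  -- but the mod-3 product is nonzero
  obtain ⟨p, t, hW⟩ := List.exists_cons_of_ne_nil hL
  rw [hW] at hchain
  obtain ⟨c, hc, he⟩ := prod_mod t p hchain
  have h7 : (g.toWord.map fun x => vecMulVec (cv x) (rv x)).prod = 0 := by
    rw [← h5, h6]
  rw [hW, he] at h7
  have h8 := congrFun (congrFun h7 0) 0
  simp only [Matrix.smul_apply, vecMulVec_apply, Matrix.zero_apply, smul_eq_mul] at h8
  exact (mul_ne_zero hc (mul_ne_zero (cv_ne _ 0) (rv_ne _ 0))) h8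

end TwoRotAux

/-- The rational rotation matrices
`A = (1/3)·[[−1, −2, 2], [2, 1, 2], [−2, 2, 1]]` and
`B = (1/3)·[[−1, 2, 2], [−2, 1, −2], [−2, −2, 1]]` freely generate a free
subgroup of rank 2 of the group of invertible 3×3 rational matrices. -/
theorem two_rational_rotations_free :
    Function.Injective
      (FreeGroup.lift
        (![Matrix.GeneralLinearGroup.mkOfDetNeZero
            (!![(-1 : ℚ)/3, (-2 : ℚ)/3, 2/3;
                (2 : ℚ)/3, (1 : ℚ)/3, 2/3;
                (-2 : ℚ)/3, (2 : ℚ)/3, 1/3])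
            (by norm_num [Matrix.det_fin_three, Matrix.vecHead, Matrix.vecTail, Matrix.cons_val_two]),
           Matrix.GeneralLinearGroup.mkOfDetNeZero
            (!![(-1 : ℚ)/3, (2 : ℚ)/3, 2/3;
                (-2 : ℚ)/3, (1 : ℚ)/3, (-2 : ℚ)/3;
                (-2 : ℚ)/3, (-2 : ℚ)/3, 1/3])
            (by norm_num [Matrix.det_fin_three, Matrix.vecHead, Matrix.vecTail, Matrix.cons_val_two])] :
          Fin 2 → GL (Fin 3) ℚ)) := by
  have hcoe : ∀ (A : Matrix (Fin 3) (Fin 3) ℚ) (h : A.det ≠ 0),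
      ((Matrix.GeneralLinearGroup.mkOfDetNeZero A h : GL (Fin 3) ℚ) :
        Matrix (Fin 3) (Fin 3) ℚ) = A := fun _ _ => rfl
  apply TwoRotAux.aux
  · rw [show ((![_, _] : Fin 2 → GL (Fin 3) ℚ) 0) = _ from Matrix.cons_val_zero _ _, hcoe]
    ext i j
    fin_cases i <;> fin_cases j <;>
      norm_num [TwoRotAux.letter, TwoRotAux.ma, TwoRotAux.mb,
        Matrix.map_apply, Matrix.smul_apply]
  · rw [show ((![_, _] : Fin 2 → GL (Fin 3) ℚ) 1) = _ from (Matrix.cons_val_one _ _).trans (Matrix.head_cons _ _), hcoe]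
    ext i j
    fin_cases i <;> fin_cases j <;>
      norm_num [TwoRotAux.letter, TwoRotAux.ma, TwoRotAux.mb,
        Matrix.map_apply, Matrix.smul_apply, Matrix.vecHead]
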